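/- Let n ≥ 1, L > 0, μ ≤ 0, and let f : ℝⁿ → ℝ belong to F_{μ,L}. Assume f⋆ = inf f is finite and that f satisfies the PL inequality with constant μ_p, with 0 < μ_p ≤ L, on the sublevel set X = {x : f(x) ≤ f(x¹)} of a point x¹ ∈ ℝⁿ. Let t₁ ∈ (0, 1/L) and x² = x¹ − t₁∇f(x¹). Then f(x²) − f⋆ ≤ [ (μ_p(1 − L t₁) + √((L − μ)(μ − μ_p)(2 − L t₁)μ_p t₁ + (L − μ)²)) / (L − μ + μ_p) ]² · (f(x¹) − f⋆). -/

import Mathlib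

open Set
open scoped RealInnerProductSpace

/-- Gradient inequality for a convex differentiable function. -/
lemma convex_grad_ineq {n : ℕ} {g : EuclideanSpace ℝ (Fin n) → ℝ}
    {G : EuclideanSpace ℝ (Fin n)} (x y : EuclideanSpace ℝ (Fin n))
    (hc : ConvexOn ℝ univ g) (hg : HasGradientAt g G x) :
    g x + ⟪G, y - x⟫ ≤ g y := by
  set φ : ℝ → ℝ := fun r => g (x + r • (y - x)) with hφ
  have hconv : ConvexOn ℝ univ φ := by
    have := hc.comp_affineMap (AffineMap.lineMap x y : ℝ →ᵃ[ℝ] EuclideanSpace ℝ (Fin n))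
    have hfun : φ = g ∘ (AffineMap.lineMap x y : ℝ →ᵃ[ℝ] EuclideanSpace ℝ (Fin n)) := by
      funext r
      simp [φ, AffineMap.lineMap_apply, add_comm]
    rw [hfun]; exact this.subset (subset_preimage_univ) convex_univ
  have hderiv : HasDerivAt φ ⟪G, y - x⟫ 0 := by
    have hF : HasFDerivAt g ((InnerProductSpace.toDual ℝ _) G) x :=
      hasGradientAt_iff_hasFDerivAt.mp hg
    have hc : HasDerivAt (fun r : ℝ => x + r • (y - x)) (y - x) 0 := by
      simpa using ((hasDerivAt_id (0:ℝ)).smul_const (y - x)).const_add x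
    have hF' : HasFDerivAt g ((InnerProductSpace.toDual ℝ _) G) (x + (0:ℝ) • (y - x)) := by simpa using hF
    have := hF'.comp_hasDerivAt (f := fun r : ℝ => x + r • (y - x)) (x := (0:ℝ)) (by simpa using hc)
    exact this
  have hslope := hconv.le_slope_of_hasDerivAt (mem_univ 0) (mem_univ 1) one_pos hderiv
  have heq : slope φ 0 1 = g y - g x := by
    simp [slope_def_field, φ, add_sub_cancel]
  rw [heq] at hslope
  linarith


lemma quad_hasGradient {n : ℕ} (c : ℝ) (x : EuclideanSpace ℝ (Fin n)) :
    HasGradientAt (fun y => c * ‖y‖ ^ 2) ((2 * c) • x) x := by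
  rw [hasGradientAt_iff_hasFDerivAt]
  have h1 : HasFDerivAt (fun y : EuclideanSpace ℝ (Fin n) => ⟪y, y⟫)
      ((fderivInnerCLM ℝ (x, x)).comp <|
        (ContinuousLinearMap.id ℝ _).prod (ContinuousLinearMap.id ℝ _)) x :=
    (hasFDerivAt_id x).inner ℝ (hasFDerivAt_id x)
  have h2 := h1.const_mul c
  have heq : (fun y : EuclideanSpace ℝ (Fin n) => c * ⟪y, y⟫) = fun y => c * ‖y‖ ^ 2 := by
    funext y; rw [real_inner_self_eq_norm_sq]
  rw [heq] at h2
  refine HasFDerivAt.congr_fderiv h2 ?_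
  ext v
  simp [real_inner_comm x v, two_mul, mul_add, real_inner_smul_left]
  ring

lemma hasGradientAt_sub {n : ℕ} {f g : EuclideanSpace ℝ (Fin n) → ℝ}
    {F G x : EuclideanSpace ℝ (Fin n)} (hf : HasGradientAt f F x)
    (hg : HasGradientAt g G x) : HasGradientAt (fun y => f y - g y) (F - G) x := by
  rw [hasGradientAt_iff_hasFDerivAt] at *
  rw [map_sub]; exact hf.sub hg

section helpers
variable {n : ℕ} {f : EuclideanSpace ℝ (Fin n) → ℝ}
  {f' : EuclideanSpace ℝ (Fin n) → EuclideanSpace ℝ (Fin n)} {L μ : ℝ}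

lemma helper_upper (hgrad : ∀ x, HasGradientAt f (f' x) x)
    (hupper : ConvexOn ℝ univ (fun x => L / 2 * ‖x‖ ^ 2 - f x))
    (a b : EuclideanSpace ℝ (Fin n)) :
    f b ≤ f a + ⟪f' a, b - a⟫ + L / 2 * ‖b - a‖ ^ 2 := by
  have hg : HasGradientAt (fun x : EuclideanSpace ℝ (Fin n) => L / 2 * ‖x‖ ^ 2 - f x)
      (L • a - f' a) a := by
    have := hasGradientAt_sub (quad_hasGradient (L / 2) a) (hgrad a)
    have h2 : (2 * (L / 2)) • a = L • a := by rw [show (2 * (L / 2) : ℝ) = L by ring]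
    rw [h2] at this
    exact this
  have key := convex_grad_ineq a b hupper hg
  have hn : ‖b - a‖ ^ 2 = ‖b‖ ^ 2 - 2 * ⟪b, a⟫ + ‖a‖ ^ 2 := norm_sub_sq_real b a
  have hcomm : ⟪a, b⟫ = ⟪b, a⟫ := (real_inner_comm a b).symm
  have hinner : ⟪L • a - f' a, b - a⟫
      = L * ⟪a, b⟫ - L * ⟪a, a⟫ - ⟪f' a, b - a⟫ := by
    rw [inner_sub_left, real_inner_smul_left, inner_sub_right, inner_sub_right]; ring
  have hself : ⟪a, a⟫ = ‖a‖ ^ 2 := real_inner_self_eq_norm_sq a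
  rw [hinner, hself, hcomm] at key
  rw [hn]
  linarith [key]

lemma helper_lower (hgrad : ∀ x, HasGradientAt f (f' x) x)
    (hlower : ConvexOn ℝ univ (fun x => f x - μ / 2 * ‖x‖ ^ 2))
    (a b : EuclideanSpace ℝ (Fin n)) :
    f a + ⟪f' a, b - a⟫ + μ / 2 * ‖b - a‖ ^ 2 ≤ f b := by
  have hg : HasGradientAt (fun x : EuclideanSpace ℝ (Fin n) => f x - μ / 2 * ‖x‖ ^ 2)
      (f' a - μ • a) a := by
    have := hasGradientAt_sub (hgrad a) (quad_hasGradient (μ / 2) a)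
    have h2 : (2 * (μ / 2)) • a = μ • a := by rw [show (2 * (μ / 2) : ℝ) = μ by ring]
    rw [h2] at this
    exact this
  have key := convex_grad_ineq a b hlower hg
  have hn : ‖b - a‖ ^ 2 = ‖b‖ ^ 2 - 2 * ⟪b, a⟫ + ‖a‖ ^ 2 := norm_sub_sq_real b a
  have hcomm : ⟪a, b⟫ = ⟪b, a⟫ := (real_inner_comm a b).symm
  have hinner : ⟪f' a - μ • a, b - a⟫
      = ⟪f' a, b - a⟫ - μ * ⟪a, b⟫ + μ * ⟪a, a⟫ := by
    rw [inner_sub_left, real_inner_smul_left, inner_sub_right, inner_sub_right]; ring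
  have hself : ⟪a, a⟫ = ‖a‖ ^ 2 := real_inner_self_eq_norm_sq a
  rw [hinner, hself, hcomm] at key
  rw [hn]
  linarith [key]

end helpers

lemma interp_ineq {n : ℕ} {f : EuclideanSpace ℝ (Fin n) → ℝ}
    {f' : EuclideanSpace ℝ (Fin n) → EuclideanSpace ℝ (Fin n)} {L μ : ℝ}
    (hgrad : ∀ x, HasGradientAt f (f' x) x)
    (hupper : ConvexOn ℝ univ (fun x => L / 2 * ‖x‖ ^ 2 - f x))
    (hlower : ConvexOn ℝ univ (fun x => f x - μ / 2 * ‖x‖ ^ 2))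
    (hE : 0 < L - μ) (u v : EuclideanSpace ℝ (Fin n)) :
    f v + ⟪f' v, u - v⟫ + μ / 2 * ‖u - v‖ ^ 2
      + 1 / (2 * (L - μ)) * ‖f' u - f' v - μ • (u - v)‖ ^ 2 ≤ f u := by
  set E : ℝ := L - μ with hEdef
  have hE0 : E ≠ 0 := ne_of_gt hE
  set w : EuclideanSpace ℝ (Fin n) := f' u - f' v - μ • (u - v) with hwdef
  set z : EuclideanSpace ℝ (Fin n) := u - (1 / E) • w with hzdef
  have h1 := helper_upper hgrad hupper u z
  have h2 := helper_lower hgrad hlower v z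
  have hzu : z - u = -((1 / E) • w) := by rw [hzdef]; abel
  have hzv : z - v = (u - v) - (1 / E) • w := by rw [hzdef]; abel
  have e1 : ⟪f' u, z - u⟫ = -((1 / E) * ⟪f' u, w⟫) := by
    rw [hzu, inner_neg_right, real_inner_smul_right]
  have e2 : ‖z - u‖ ^ 2 = (1 / E) ^ 2 * ‖w‖ ^ 2 := by
    rw [hzu, norm_neg, norm_smul, Real.norm_eq_abs, mul_pow, sq_abs]
  have e3 : ⟪f' v, z - v⟫ = ⟪f' v, u - v⟫ - (1 / E) * ⟪f' v, w⟫ := by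
    rw [hzv, inner_sub_right, real_inner_smul_right]
  have e4 : ‖z - v‖ ^ 2 = ‖u - v‖ ^ 2 - 2 * ((1 / E) * ⟪u - v, w⟫) + (1 / E) ^ 2 * ‖w‖ ^ 2 := by
    rw [hzv, norm_sub_sq_real, real_inner_smul_right, norm_smul, Real.norm_eq_abs, mul_pow,
      sq_abs]
  have e5a : ⟪f' u - f' v - μ • (u - v), w⟫ = ‖w‖ ^ 2 := by
    rw [hwdef, real_inner_self_eq_norm_sq]
  have e5b : ⟪f' u - f' v - μ • (u - v), w⟫ = ⟪f' u, w⟫ - ⟪f' v, w⟫ - μ * ⟪u - v, w⟫ := by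
    simp only [inner_sub_left, real_inner_smul_left]
  have e5 : ⟪f' u, w⟫ - ⟪f' v, w⟫ - μ * ⟪u - v, w⟫ = ‖w‖ ^ 2 := e5b.symm.trans e5a
  have e6 : L * ((1 / E) ^ 2 * ‖w‖ ^ 2) - μ * ((1 / E) ^ 2 * ‖w‖ ^ 2) = (1 / E) * ‖w‖ ^ 2 := by
    field_simp
    ring
  have e7 : (1 / E) * ⟪f' u, w⟫ - (1 / E) * ⟪f' v, w⟫ - μ * ((1 / E) * ⟪u - v, w⟫)
      = (1 / E) * ‖w‖ ^ 2 := by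
    rw [← e5]; ring
  rw [e1, e2] at h1
  rw [e3, e4] at h2
  have hgoal : 1 / (2 * E) * ‖w‖ ^ 2 = (1 / 2) * ((1 / E) * ‖w‖ ^ 2) := by
    field_simp
  rw [hgoal]
  linarith [h1, h2, e6, e7]

set_option maxHeartbeats 4000000 in
theorem stmt_0 (n : ℕ) (hn : 1 ≤ n)
    (f : EuclideanSpace ℝ (Fin n) → ℝ)
    (f' : EuclideanSpace ℝ (Fin n) → EuclideanSpace ℝ (Fin n))
    (L μ : ℝ) (hL : 0 < L) (hμ : μ ≤ 0)
    (hgrad : ∀ x, HasGradientAt f (f' x) x)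
    (hupper : ConvexOn ℝ univ (fun x => L / 2 * ‖x‖ ^ 2 - f x))
    (hlower : ConvexOn ℝ univ (fun x => f x - μ / 2 * ‖x‖ ^ 2))
    (fstar : ℝ) (hfstar : IsGLB (range f) fstar)
    (μp : ℝ) (hμp : 0 < μp) (hμpL : μp ≤ L)
    (x1 : EuclideanSpace ℝ (Fin n))
    (hPL : ∀ x, f x ≤ f x1 → f x - fstar ≤ 1 / (2 * μp) * ‖f' x‖ ^ 2)
    (t1 : ℝ) (ht1 : t1 ∈ Ioo 0 (1 / L))
    (x2 : EuclideanSpace ℝ (Fin n)) (hx2 : x2 = x1 - t1 • f' x1) :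
    f x2 - fstar ≤
      ((μp * (1 - L * t1) +
          Real.sqrt ((L - μ) * (μ - μp) * (2 - L * t1) * μp * t1 + (L - μ) ^ 2)) /
            (L - μ + μp)) ^ 2 * (f x1 - fstar) := by
  obtain ⟨ht0, htL⟩ := ht1
  have hLt1 : L * t1 < 1 := by
    rw [← lt_div_iff₀' hL]; exact htL
  have hE : 0 < L - μ := by linarith
  have hμμp : 0 < μp - μ := by linarith
  -- positivity of the sqrt argument
  have h1Lt : 0 < 1 - L * t1 := by linarith
  have hkey1 : (2 - L * t1) * (L * t1) < 1 := by nlinarith [mul_pos h1Lt h1Lt]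
  have hargpos : 0 < (L - μ) * (μ - μp) * (2 - L * t1) * μp * t1 + (L - μ) ^ 2 := by
    have h1 : (μp - μ) * ((2 - L * t1) * (μp * t1)) < L - μ := by
      have h3 : L * ((2 - L * t1) * (μp * t1)) < μp := by
        have h2 : L * ((2 - L * t1) * (μp * t1)) = μp * ((2 - L * t1) * (L * t1)) := by ring
        rw [h2]; nlinarith [hkey1, hμp]
      have h5 : (μp - μ) * (L * ((2 - L * t1) * (μp * t1))) < (μp - μ) * μp :=
        mul_lt_mul_of_pos_left h3 hμμp
      have h6 : (μp - μ) * μp ≤ (L - μ) * L := by nlinarith [mul_nonneg (sub_nonneg.mpr hμpL) (show (0:ℝ) ≤ L + μp - μ by linarith)]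
      have h7 : ((μp - μ) * ((2 - L * t1) * (μp * t1))) * L < (L - μ) * L := by nlinarith [h5, h6]
      exact lt_of_mul_lt_mul_right h7 hL.le
    nlinarith [mul_lt_mul_of_pos_left h1 hE]
  set σ : ℝ := Real.sqrt ((L - μ) * (μ - μp) * (2 - L * t1) * μp * t1 + (L - μ) ^ 2) with hσdef
  have hσ2 : σ ^ 2 = (L - μ) * (μ - μp) * (2 - L * t1) * μp * t1 + (L - μ) ^ 2 :=
    Real.sq_sqrt hargpos.le
  have hσpos : 0 < σ := Real.sqrt_pos.mpr hargpos
  have hσleE : σ ≤ L - μ := by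
    have hsq : σ ^ 2 ≤ (L - μ) ^ 2 := by
      rw [hσ2]
      have heq : (L - μ) * (μ - μp) * (2 - L * t1) * μp * t1
          = -((L - μ) * (μp - μ) * ((2 - L * t1) * (μp * t1))) := by ring
      have h4 : 0 ≤ (L - μ) * (μp - μ) * ((2 - L * t1) * (μp * t1)) := by
        have h40 : (0:ℝ) < 2 - L * t1 := by linarith
        have h41 : (0:ℝ) ≤ L - μ := hE.le
        have h42 : (0:ℝ) ≤ μp - μ := hμμp.le
        positivity
      linarith [heq ▸ (neg_nonpos.mpr h4)]
    have hsum : 0 < σ + (L - μ) := by linarith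
    nlinarith [hsq, hsum]
  have hE1Lt : (L - μ) * (1 - L * t1) ≤ σ := by
    have hsq : ((L - μ) * (1 - L * t1)) ^ 2 ≤ σ ^ 2 := by
      rw [hσ2]
      have key : (0:ℝ) ≤ (L - μ) * L - (μp - μ) * μp := by
        nlinarith [mul_nonneg (sub_nonneg.mpr hμpL) (show (0:ℝ) ≤ L + μp - μ by linarith)]
      have hint := mul_nonneg (mul_nonneg (mul_nonneg hE.le
        (show (0:ℝ) ≤ 2 - L*t1 by linarith)) ht0.le) key
      linarith [hint]
    have hnn : 0 ≤ (L - μ) * (1 - L * t1) := by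
      have : 0 ≤ 1 - L * t1 := by linarith
      positivity
    have hsum : 0 < σ + (L - μ) * (1 - L * t1) := by linarith
    nlinarith [hsq, hsum]
  set N : ℝ := μp * (1 - L * t1) + σ with hNdef
  set D : ℝ := L - μ + μp with hDdef
  have hN : 0 ≤ N := by
    have : 0 ≤ μp * (1 - L * t1) := by nlinarith [hμp, hLt1]
    rw [hNdef]; linarith
  have hD : 0 < D := by rw [hDdef]; linarith
  have hEDσN : σ * N ≤ (L - μ) * D := by
    rw [hNdef, hDdef]
    have ha1 : σ * (μp * (1 - L * t1)) ≤ (L - μ) * (μp * (1 - L * t1)) :=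
      mul_le_mul_of_nonneg_right hσleE (mul_nonneg hμp.le h1Lt.le)
    have ha2 : (L - μ) * (μp * (1 - L * t1)) ≤ (L - μ) * μp := by
      have : μp * (1 - L * t1) ≤ μp := by nlinarith [hμp, ht0, hL]
      exact mul_le_mul_of_nonneg_left this hE.le
    have ha3 : σ * σ ≤ (L - μ) * (L - μ) :=
      mul_le_mul hσleE hσleE hσpos.le hE.le
    nlinarith [ha1, ha2, ha3]
  have hσDEN : (L - μ) * N ≤ σ * D := by
    rw [hNdef, hDdef]
    have h1 : (L - μ) * (μp * (1 - L * t1)) ≤ σ * μp :=  by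
      have := mul_le_mul_of_nonneg_left hE1Lt hμp.le
      nlinarith [this]
    nlinarith [h1]
  -- scalar quantities
  set g1 := f' x1 with hg1
  set g2 := f' x2 with hg2
  set s1 : ℝ := ‖g1‖ ^ 2 with hs1
  set s2 : ℝ := ‖g2‖ ^ 2 with hs2
  set s12 : ℝ := ⟪g1, g2⟫ with hs12
  have hx12 : x1 - x2 = t1 • g1 := by rw [hx2]; abel
  have hx21 : x2 - x1 = -(t1 • g1) := by rw [hx2]; abel
  -- descent: f x2 ≤ f x1
  have hdesc : f x2 ≤ f x1 := by
    have h := helper_upper hgrad hupper x1 x2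
    have e1 : ⟪g1, x2 - x1⟫ = -(t1 * s1) := by
      rw [hx21, inner_neg_right, real_inner_smul_right, hs1, real_inner_self_eq_norm_sq]
    have e2 : ‖x2 - x1‖ ^ 2 = t1 ^ 2 * s1 := by
      rw [hx21, norm_neg, norm_smul, Real.norm_eq_abs, mul_pow, sq_abs, hs1]
    rw [e1, e2] at h
    have hs1nn : 0 ≤ s1 := by rw [hs1]; positivity
    nlinarith [h, hs1nn, mul_pos ht0 hL, hLt1, ht0]
  -- PL inequalities
  have hPL1 : f x1 - fstar ≤ 1 / (2 * μp) * s1 := hPL x1 le_rfl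
  have hPL2 : f x2 - fstar ≤ 1 / (2 * μp) * s2 := hPL x2 hdesc
  -- interpolation inequality between x1 and x2
  have hB2 := interp_ineq hgrad hupper hlower hE x1 x2
  have e3 : ⟪g2, x1 - x2⟫ = t1 * s12 := by
    rw [hx12, real_inner_smul_right, hs12, real_inner_comm]
  have e4 : ‖x1 - x2‖ ^ 2 = t1 ^ 2 * s1 := by
    rw [hx12, norm_smul, Real.norm_eq_abs, mul_pow, sq_abs, hs1]
  have e5 : ‖g1 - g2 - μ • (x1 - x2)‖ ^ 2
      = (1 - μ * t1) ^ 2 * s1 - 2 * ((1 - μ * t1) * s12) + s2 := by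
    have hv : g1 - g2 - μ • (x1 - x2) = (1 - μ * t1) • g1 - g2 := by
      rw [hx12]; module
    rw [hv, norm_sub_sq_real, real_inner_smul_left, norm_smul, Real.norm_eq_abs, mul_pow,
      sq_abs, hs1, hs12, hs2]
  rw [e3, e4, e5] at hB2
  -- Cauchy–Schwarz style residual
  have hcs : 0 ≤ N ^ 2 * s1 - 2 * (N * D) * s12 + D ^ 2 * s2 := by
    have h := sq_nonneg ‖N • g1 - D • g2‖
    rw [norm_sub_sq_real, real_inner_smul_left, real_inner_smul_right, norm_smul, norm_smul,
      Real.norm_eq_abs, Real.norm_eq_abs, mul_pow, mul_pow, sq_abs, sq_abs, ← hs1, ← hs2,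
      ← hs12] at h
    nlinarith [h]
  clear_value σ N D s12 s1 s2 g1 g2
  have hE0 : (L - μ) ≠ 0 := ne_of_gt hE
  have hμp0 : μp ≠ 0 := ne_of_gt hμp
  -- the master identity (denominators cleared)
  have master : (4 * (L - μ) * μp) * (2 * σ * (N ^ 2 * (f x1 - fstar) - D ^ 2 * (f x2 - fstar))) =
      2 * (L - μ) * N * D *
        (4 * (L - μ) * μp * (f x1 - f x2 - t1 * s12 - μ / 2 * (t1 ^ 2 * s1))
          - 2 * μp * ((1 - μ * t1) ^ 2 * s1 - 2 * ((1 - μ * t1) * s12) + s2))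
      + 2 * N * ((L - μ) * D - σ * N) * (2 * (L - μ) * s1 - 4 * (L - μ) * μp * (f x1 - fstar))
      + 2 * (σ * D - (L - μ) * N) * D * (2 * (L - μ) * s2 - 4 * (L - μ) * μp * (f x2 - fstar))
      + (1 - L * t1) * ((4 * (L - μ) * μp) * (N ^ 2 * s1 - 2 * (N * D) * s12 + D ^ 2 * s2)) := by
    rw [hNdef, hDdef]
    linear_combination (4 * (L - μ) * (μp * (1 - L * t1) + σ) * s1) * hσ2
  have t1nn : 0 ≤ 4 * (L - μ) * μp * (f x1 - f x2 - t1 * s12 - μ / 2 * (t1 ^ 2 * s1))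
      - 2 * μp * ((1 - μ * t1) ^ 2 * s1 - 2 * ((1 - μ * t1) * s12) + s2) := by
    have h2 : 0 ≤ f x1 - f x2 - t1 * s12 - μ / 2 * (t1 ^ 2 * s1)
        - 1 / (2 * (L - μ)) * ((1 - μ * t1) ^ 2 * s1 - 2 * ((1 - μ * t1) * s12) + s2) := by
      linarith [hB2]
    have h3 := mul_nonneg (show (0:ℝ) ≤ 4 * (L - μ) * μp by positivity) h2
    have h4 : 4 * (L - μ) * μp *
        (1 / (2 * (L - μ)) * ((1 - μ * t1) ^ 2 * s1 - 2 * ((1 - μ * t1) * s12) + s2))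
        = 2 * μp * ((1 - μ * t1) ^ 2 * s1 - 2 * ((1 - μ * t1) * s12) + s2) := by
      field_simp
      ring
    linarith [h3, h4.le, h4.ge]
  have t2nn : 0 ≤ 2 * (L - μ) * s1 - 4 * (L - μ) * μp * (f x1 - fstar) := by
    have h3 := mul_le_mul_of_nonneg_left hPL1 (show (0:ℝ) ≤ 4 * (L - μ) * μp by positivity)
    have h4 : 4 * (L - μ) * μp * (1 / (2 * μp) * s1) = 2 * (L - μ) * s1 := by
      field_simp
      ring
    linarith [h3, h4.le, h4.ge]
  have t3nn : 0 ≤ 2 * (L - μ) * s2 - 4 * (L - μ) * μp * (f x2 - fstar) := by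
    have h3 := mul_le_mul_of_nonneg_left hPL2 (show (0:ℝ) ≤ 4 * (L - μ) * μp by positivity)
    have h4 : 4 * (L - μ) * μp * (1 / (2 * μp) * s2) = 2 * (L - μ) * s2 := by
      field_simp
      ring
    linarith [h3, h4.le, h4.ge]
  have big : 0 ≤ (4 * (L - μ) * μp) * (2 * σ * (N ^ 2 * (f x1 - fstar) - D ^ 2 * (f x2 - fstar))) := by
    rw [master]
    have m1 : 0 ≤ 2 * (L - μ) * N * D := by positivity
    have m2 : 0 ≤ 2 * N * ((L - μ) * D - σ * N) := by
      have : 0 ≤ (L - μ) * D - σ * N := by linarith [hEDσN]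
      positivity
    have m3 : 0 ≤ 2 * (σ * D - (L - μ) * N) * D := by
      have : 0 ≤ σ * D - (L - μ) * N := by linarith [hσDEN]
      positivity
    have m4 : 0 ≤ (1 - L * t1) * ((4 * (L - μ) * μp) * (N ^ 2 * s1 - 2 * (N * D) * s12 + D ^ 2 * s2)) := by
      have h0 : 0 ≤ (4 * (L - μ) * μp) * (N ^ 2 * s1 - 2 * (N * D) * s12 + D ^ 2 * s2) := by
        have : 0 ≤ 4 * (L - μ) * μp := by positivity
        exact mul_nonneg this hcs
      exact mul_nonneg h1Lt.le h0
    have p1 := mul_nonneg m1 t1nn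
    have p2 := mul_nonneg m2 t2nn
    have p3 := mul_nonneg m3 t3nn
    linarith [p1, p2, p3, m4]
  have hX : 0 ≤ N ^ 2 * (f x1 - fstar) - D ^ 2 * (f x2 - fstar) := by
    have hc : (0:ℝ) < 4 * (L - μ) * μp * (2 * σ) := by positivity
    have heq : (4 * (L - μ) * μp) * (2 * σ * (N ^ 2 * (f x1 - fstar) - D ^ 2 * (f x2 - fstar)))
        = (4 * (L - μ) * μp * (2 * σ)) * (N ^ 2 * (f x1 - fstar) - D ^ 2 * (f x2 - fstar)) := by
      ring
    rw [heq] at big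
    exact nonneg_of_mul_nonneg_right big hc
  have hD2 : (0:ℝ) < D ^ 2 := by positivity
  rw [div_pow, div_mul_eq_mul_div, le_div_iff₀ hD2]
  linarith [hX]
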